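/- arXiv:2003.06492 — 3 statements merged into one kernel-verified Lean document; each statement's English description precedes it below -/
import Mathlib

section
/- Let V ⊆ 𝒜, let M and M' be initial structures, s a state of M, s' a state of M', and n ≥ 0. If the computation trees Tr_n(s) of M and Tr_n(s') of M' are (𝒜∖V)-bisimilar, then the characterizing formulas satisfy F_V(Tr_n(s)) ≡ F_V(Tr_n(s')). -/
universe u

/-- A Kripke structure over a set of atoms: a finite nonempty set of states,
a serial transition relation, and a labeling function. -/
structure Kripke (Atom : Type u) where
  State : Type u
  stateFinite : Finite State
  stateNonempty : Nonempty State
  R : State → State → Prop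
  serial : ∀ s, ∃ t, R s t
  L : State → Set Atom

instance {Atom : Type u} (M : Kripke Atom) : Finite M.State := M.stateFinite

/-- A K-structure: a Kripke structure together with one of its states. -/
structure KStruct (Atom : Type u) where
  M : Kripke Atom
  s : M.State

/-- An initial structure: a Kripke structure with an initial state `s0`,
i.e. a state admitting a path visiting every state. -/
structure InitKripke (Atom : Type u) extends Kripke Atom where
  s0 : State
  initial : ∃ π : ℕ → State, π 0 = s0 ∧ (∀ n, R (π n) (π (n + 1))) ∧ ∀ t, ∃ n, π n = t

/-- The (initial) K-structure associated to an initial structure. -/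
def InitKripke.toKS {Atom : Type u} (M : InitKripke Atom) : KStruct Atom :=
  ⟨M.toKripke, M.s0⟩

/-- The approximations `B_n^V` of `V`-bisimilarity on K-structures. -/
def BRel {Atom : Type u} (V : Set Atom) : ℕ → KStruct Atom → KStruct Atom → Prop
  | 0 => fun K1 K2 => K1.M.L K1.s \ V = K2.M.L K2.s \ V
  | n + 1 => fun K1 K2 =>
      K1.M.L K1.s \ V = K2.M.L K2.s \ V ∧
      (∀ t1, K1.M.R K1.s t1 → ∃ t2, K2.M.R K2.s t2 ∧ BRel V n ⟨K1.M, t1⟩ ⟨K2.M, t2⟩) ∧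
      (∀ t2, K2.M.R K2.s t2 → ∃ t1, K1.M.R K1.s t1 ∧ BRel V n ⟨K1.M, t1⟩ ⟨K2.M, t2⟩)

/-- `V`-bisimilarity `K1 ↔_V K2` of K-structures. -/
def VBisim {Atom : Type u} (V : Set Atom) (K1 K2 : KStruct Atom) : Prop :=
  ∀ n, BRel V n K1 K2

/-- CTL formulas in existential normal form. -/
inductive CTL (Atom : Type u) : Type u
  | bot  : CTL Atom
  | top  : CTL Atom
  | atom (p : Atom) : CTL Atom
  | neg  (φ : CTL Atom) : CTL Atom
  | or   (φ ψ : CTL Atom) : CTL Atom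
  | EX   (φ : CTL Atom) : CTL Atom
  | EG   (φ : CTL Atom) : CTL Atom
  | EU   (φ ψ : CTL Atom) : CTL Atom

namespace CTL
variable {Atom : Type u}

def and (φ ψ : CTL Atom) : CTL Atom := .neg (.or (.neg φ) (.neg ψ))
def imp (φ ψ : CTL Atom) : CTL Atom := .or (.neg φ) ψ
def iff (φ ψ : CTL Atom) : CTL Atom := (φ.imp ψ).and (ψ.imp φ)
def AX (φ : CTL Atom) : CTL Atom := .neg (.EX (.neg φ))
def EF (φ : CTL Atom) : CTL Atom := .EU .top φ
def AF (φ : CTL Atom) : CTL Atom := .neg (.EG (.neg φ))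
def AG (φ : CTL Atom) : CTL Atom := .neg (.EU .top (.neg φ))

/-- The set of atoms occurring in a formula. -/
def vars : CTL Atom → Set Atom
  | .bot => ∅
  | .top => ∅
  | .atom p => {p}
  | .neg φ => vars φ
  | .or φ ψ => vars φ ∪ vars ψ
  | .EX φ => vars φ
  | .EG φ => vars φ
  | .EU φ ψ => vars φ ∪ vars ψ

end CTL

/-- The standard CTL satisfaction relation `(M,s) ⊨ φ`. -/
def Sat {Atom : Type u} (M : Kripke Atom) : CTL Atom → M.State → Prop
  | .bot => fun _ => False
  | .top => fun _ => True
  | .atom p => fun s => p ∈ M.L s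
  | .neg φ => fun s => ¬ Sat M φ s
  | .or φ ψ => fun s => Sat M φ s ∨ Sat M ψ s
  | .EX φ => fun s => ∃ t, M.R s t ∧ Sat M φ t
  | .EG φ => fun s => ∃ π : ℕ → M.State, π 0 = s ∧ (∀ n, M.R (π n) (π (n + 1))) ∧
      ∀ n, Sat M φ (π n)
  | .EU φ ψ => fun s => ∃ π : ℕ → M.State, π 0 = s ∧ (∀ n, M.R (π n) (π (n + 1))) ∧
      ∃ i, Sat M ψ (π i) ∧ ∀ j < i, Sat M φ (π j)

/-- Satisfaction for K-structures. -/
def KSat {Atom : Type u} (K : KStruct Atom) (φ : CTL Atom) : Prop := Sat K.M φ K.s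

/-- The set of models (initial K-structures) of a formula. -/
def CTLMod {Atom : Type u} (φ : CTL Atom) : Set (InitKripke Atom) :=
  {M | Sat M.toKripke φ M.s0}

def Entails {Atom : Type u} (φ ψ : CTL Atom) : Prop := CTLMod φ ⊆ CTLMod ψ

def CTLEquiv {Atom : Type u} (φ ψ : CTL Atom) : Prop := CTLMod φ = CTLMod ψ

/-- `IR φ V`: φ is irrelevant to the atoms in V. -/
def IR {Atom : Type u} (φ : CTL Atom) (V : Set Atom) : Prop :=
  ∃ ψ : CTL Atom, CTL.vars ψ ∩ V = ∅ ∧ CTLEquiv φ ψ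

/-- `V`-bisimilarity of depth-`n` computation trees rooted at `s1` (in `M1`) and `s2` (in `M2`). -/
def TreeBisim {Atom : Type u} (V : Set Atom) (M1 M2 : Kripke Atom) :
    ℕ → M1.State → M2.State → Prop
  | 0 => fun s1 s2 => M1.L s1 \ V = M2.L s2 \ V
  | n + 1 => fun s1 s2 =>
      M1.L s1 \ V = M2.L s2 \ V ∧
      (∀ t1, M1.R s1 t1 → ∃ t2, M2.R s2 t2 ∧ TreeBisim V M1 M2 n t1 t2) ∧
      (∀ t2, M2.R s2 t2 → ∃ t1, M1.R s1 t1 ∧ TreeBisim V M1 M2 n t1 t2)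

/-- Finite conjunction of a list of formulas. -/
def andList {Atom : Type u} : List (CTL Atom) → CTL Atom
  | [] => .top
  | φ :: l => φ.and (andList l)

/-- Finite disjunction of a list of formulas. -/
def orList {Atom : Type u} : List (CTL Atom) → CTL Atom
  | [] => .bot
  | φ :: l => .or φ (orList l)

/-- A list enumerating a subset of a finite type. -/
noncomputable def setToList {α : Type u} [Finite α] (s : Set α) : List α :=
  s.toFinite.toFinset.toList

/-- The list of `R`-successors of a state. -/
noncomputable def Kripke.succList {Atom : Type u} (M : Kripke Atom) (s : M.State) :
    List M.State :=
  setToList {t | M.R s t}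

/-- The characterizing formula `F_V(Tr_0(s))` of the depth-0 computation tree. -/
noncomputable def charTree0 {Atom : Type u} [Finite Atom] (M : Kripke Atom) (V : Set Atom)
    (s : M.State) : CTL Atom :=
  (andList ((setToList (V ∩ M.L s)).map CTL.atom)).and
    (andList ((setToList (V \ M.L s)).map fun q => CTL.neg (CTL.atom q)))

/-- The characterizing formula `F_V(Tr_n(s))` of the depth-`n` computation tree of `s`. -/
noncomputable def charTree {Atom : Type u} [Finite Atom] (M : Kripke Atom) (V : Set Atom) :
    ℕ → M.State → CTL Atom
  | 0 => fun s => charTree0 M V s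
  | k + 1 => fun s =>
      (andList ((M.succList s).map fun t => CTL.EX (charTree M V k t))).and
        ((CTL.AX (orList ((M.succList s).map (charTree M V k)))).and (charTree0 M V s))

/-- `dis_V(M,s,s',k)`: `s` and `s'` are `V`-distinguishable, and `k` is the least depth at which
their computation trees fail to be `(𝒜∖V)`-bisimilar. -/
def dis {Atom : Type u} (M : Kripke Atom) (V : Set Atom) (s s' : M.State) (k : ℕ) : Prop :=
  ¬ VBisim Vᶜ ⟨M, s⟩ ⟨M, s'⟩ ∧
  IsLeast {n | ¬ TreeBisim Vᶜ M M n s s'} k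

/-- The characterization number `ch(M,V)`. -/
noncomputable def ch {Atom : Type u} (M : Kripke Atom) (V : Set Atom) : ℕ :=
  letI := Classical.dec (∃ s s' k, dis M V s s' k)
  if ∃ s s' k, dis M V s s' k then
    sSup {k | ∃ s s', dis M V s s' k}
  else
    sInf {k | (fun s s' : M.State => BRel Vᶜ k ⟨M, s⟩ ⟨M, s'⟩) =
              (fun s s' : M.State => BRel Vᶜ (k + 1) ⟨M, s⟩ ⟨M, s'⟩)}

/-- The characterizing formula `F_V(M,s0)` of an initial K-structure on `V`. -/
noncomputable def charForm {Atom : Type u} [Finite Atom] (M : InitKripke Atom) (V : Set Atom) :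
    CTL Atom :=
  let T : M.State → CTL Atom := fun s => charTree M.toKripke V (ch M.toKripke V) s
  (T M.s0).and
    (andList ((setToList (Set.univ : Set M.State)).map fun s =>
      CTL.AG ((T s).imp
        ((andList ((M.toKripke.succList s).map fun t => CTL.EX (T t))).and
          (CTL.AX (orList ((M.toKripke.succList s).map T)))))))

/-- `ψ` is a result of forgetting `V` from `φ`. -/
def IsForget {Atom : Type u} (φ : CTL Atom) (V : Set Atom) (ψ : CTL Atom) : Prop :=
  CTL.vars ψ ∩ V = ∅ ∧
  CTLMod ψ = {K : InitKripke Atom | ∃ K' ∈ CTLMod φ, VBisim V K'.toKS K.toKS}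

section Aux
variable {Atom : Type u}

lemma sat_and (N : Kripke Atom) (φ ψ : CTL Atom) (s : N.State) :
    Sat N (φ.and ψ) s ↔ Sat N φ s ∧ Sat N ψ s := by
  simp only [CTL.and, Sat]; tauto

lemma sat_AX (N : Kripke Atom) (φ : CTL Atom) (s : N.State) :
    Sat N (CTL.AX φ) s ↔ ∀ t, N.R s t → Sat N φ t := by
  simp only [CTL.AX, Sat]; push_neg; rfl

lemma sat_andList (N : Kripke Atom) (l : List (CTL Atom)) (s : N.State) :
    Sat N (andList l) s ↔ ∀ φ ∈ l, Sat N φ s := by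
  induction l with
  | nil => simp [andList, Sat]
  | cons φ l ih => simp [andList, sat_and, ih]

lemma sat_orList (N : Kripke Atom) (l : List (CTL Atom)) (s : N.State) :
    Sat N (orList l) s ↔ ∃ φ ∈ l, Sat N φ s := by
  induction l with
  | nil => simp [orList, Sat]
  | cons φ l ih => simp [orList, Sat, ih]

lemma mem_setToList {α : Type u} [Finite α] (S : Set α) (a : α) :
    a ∈ setToList S ↔ a ∈ S := by
  simp [setToList]

lemma mem_succList (M : Kripke Atom) (s t : M.State) :
    t ∈ M.succList s ↔ M.R s t := mem_setToList _ _

lemma charTree0_eq [Finite Atom] (V : Set Atom) (M M' : Kripke Atom)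
    (s : M.State) (s' : M'.State) (h : M.L s \ Vᶜ = M'.L s' \ Vᶜ) :
    charTree0 M V s = charTree0 M' V s' := by
  have h0 : ∀ p, p ∈ M.L s ∩ V ↔ p ∈ M'.L s' ∩ V := by
    intro p
    have := Set.ext_iff.1 h p
    simpa [Set.mem_diff, Set.mem_compl_iff, not_not] using this
  have h1 : V ∩ M.L s = V ∩ M'.L s' := by
    ext p; have := h0 p; simp only [Set.mem_inter_iff] at *; tauto
  have h2 : V \ M.L s = V \ M'.L s' := by
    ext p; have := h0 p; simp only [Set.mem_inter_iff, Set.mem_diff] at *; tauto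
  unfold charTree0
  rw [h1, h2]

lemma sat_charTree_succ [Finite Atom] (V : Set Atom) (M : Kripke Atom) (k : ℕ)
    (s : M.State) (N : Kripke Atom) (u : N.State) :
    Sat N (charTree M V (k + 1) s) u ↔
      (∀ t, M.R s t → ∃ w, N.R u w ∧ Sat N (charTree M V k t) w) ∧
      (∀ w, N.R u w → ∃ t, M.R s t ∧ Sat N (charTree M V k t) w) ∧
      Sat N (charTree0 M V s) u := by
  simp only [charTree, sat_and, sat_andList, sat_AX, sat_orList, List.mem_map,
    mem_succList]
  constructor
  · rintro ⟨hA, hB, hC⟩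
    refine ⟨fun t ht => ?_, fun w hw => ?_, hC⟩
    · obtain ⟨w, hw, hs⟩ := hA _ ⟨t, ht, rfl⟩
      exact ⟨w, hw, hs⟩
    · obtain ⟨_, ⟨t, ht, rfl⟩, hs⟩ := hB w hw
      exact ⟨t, ht, hs⟩
  · rintro ⟨hA, hB, hC⟩
    refine ⟨?_, fun w hw => ?_, hC⟩
    · rintro φ ⟨t, ht, rfl⟩
      obtain ⟨w, hw, hs⟩ := hA t ht
      exact ⟨w, hw, hs⟩
    · obtain ⟨t, ht, hs⟩ := hB w hw
      exact ⟨_, ⟨t, ht, rfl⟩, hs⟩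

lemma charTree_sat_equiv [Finite Atom] (V : Set Atom) (M M' : Kripke Atom) (n : ℕ) :
    ∀ (s : M.State) (s' : M'.State), TreeBisim Vᶜ M M' n s s' →
      ∀ (N : Kripke Atom) (u : N.State),
        Sat N (charTree M V n s) u ↔ Sat N (charTree M' V n s') u := by
  induction n with
  | zero =>
    intro s s' h N u
    show Sat N (charTree0 M V s) u ↔ Sat N (charTree0 M' V s') u
    rw [charTree0_eq V M M' s s' h]
  | succ k ih =>
    intro s s' h N u
    obtain ⟨h0, h12, h21⟩ := h
    rw [sat_charTree_succ, sat_charTree_succ]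
    constructor
    · rintro ⟨hA, hB, hC⟩
      refine ⟨fun t2 ht2 => ?_, fun w hw => ?_, ?_⟩
      · obtain ⟨t1, ht1, hb⟩ := h21 t2 ht2
        obtain ⟨w, hw, hs⟩ := hA t1 ht1
        exact ⟨w, hw, (ih t1 t2 hb N w).1 hs⟩
      · obtain ⟨t1, ht1, hs⟩ := hB w hw
        obtain ⟨t2, ht2, hb⟩ := h12 t1 ht1
        exact ⟨t2, ht2, (ih t1 t2 hb N w).1 hs⟩
      · rwa [← charTree0_eq V M M' s s' h0]
    · rintro ⟨hA, hB, hC⟩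
      refine ⟨fun t1 ht1 => ?_, fun w hw => ?_, ?_⟩
      · obtain ⟨t2, ht2, hb⟩ := h12 t1 ht1
        obtain ⟨w, hw, hs⟩ := hA t2 ht2
        exact ⟨w, hw, (ih t1 t2 hb N w).2 hs⟩
      · obtain ⟨t2, ht2, hs⟩ := hB w hw
        obtain ⟨t1, ht1, hb⟩ := h21 t2 ht2
        exact ⟨t1, ht1, (ih t1 t2 hb N w).2 hs⟩
      · rwa [charTree0_eq V M M' s s' h0]

end Aux

/-- if `Tr_n(s)` and `Tr_n(s')` are `(𝒜∖V)`-bisimilar, then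
`F_V(Tr_n(s)) ≡ F_V(Tr_n(s'))`. -/
theorem treeBisim_charTree_equiv {Atom : Type u} [Finite Atom] (V : Set Atom)
    (M M' : InitKripke Atom) (s : M.State) (s' : M'.State) (n : ℕ)
    (h : TreeBisim Vᶜ M.toKripke M'.toKripke n s s') :
    CTLEquiv (charTree M.toKripke V n s) (charTree M'.toKripke V n s') := by
  ext K
  simp only [CTLMod, Set.mem_setOf_eq]
  exact charTree_sat_equiv V M.toKripke M'.toKripke n s s' h K.toKripke K.s0
end

section
/- Let φ be a CTL formula, V ⊆ 𝒜, and let ψ be a result of forgetting V from φ. Then ψ satisfies the forgetting postulates: (W) φ ⊨ ψ; (PP) for every formula η with IR(η,V), if φ ⊨ η then ψ ⊨ η; (NP) for every formula η with IR(η,V), if φ ⊭ η then ψ ⊭ η; (IR) IR(ψ,V). Equivalently, Mod(ψ) equals the set of models of the theory { η : φ ⊨ η and IR(η,V) }. -/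
universe u

section ForgetAux

variable {Atom : Type u} {V : Set Atom}

lemma BRel_refl : ∀ n (K : KStruct Atom), BRel V n K K
  | 0, K => rfl
  | n + 1, K =>
    ⟨rfl, fun t ht => ⟨t, ht, BRel_refl n ⟨K.M, t⟩⟩, fun t ht => ⟨t, ht, BRel_refl n ⟨K.M, t⟩⟩⟩

lemma BRel_symm : ∀ n (K1 K2 : KStruct Atom), BRel V n K1 K2 → BRel V n K2 K1
  | 0, _, _, h => h.symm
  | n + 1, K1, K2, ⟨hl, h1, h2⟩ =>
    ⟨hl.symm,
     fun t2 ht2 => by obtain ⟨t1, ht1, hb⟩ := h2 t2 ht2; exact ⟨t1, ht1, BRel_symm n _ _ hb⟩,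
     fun t1 ht1 => by obtain ⟨t2, ht2, hb⟩ := h1 t1 ht1; exact ⟨t2, ht2, BRel_symm n _ _ hb⟩⟩

lemma VBisim_symm {K1 K2 : KStruct Atom} (h : VBisim V K1 K2) : VBisim V K2 K1 :=
  fun n => BRel_symm n _ _ (h n)

lemma BRel_mono : ∀ n (K1 K2 : KStruct Atom), BRel V (n + 1) K1 K2 → BRel V n K1 K2
  | 0, _, _, h => h.1
  | n + 1, K1, K2, ⟨hl, h1, h2⟩ =>
    ⟨hl,
     fun t1 ht1 => by obtain ⟨t2, ht2, hb⟩ := h1 t1 ht1; exact ⟨t2, ht2, BRel_mono n _ _ hb⟩,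
     fun t2 ht2 => by obtain ⟨t1, ht1, hb⟩ := h2 t2 ht2; exact ⟨t1, ht1, BRel_mono n _ _ hb⟩⟩

lemma BRel_mono_le {n m : ℕ} (hnm : n ≤ m) (K1 K2 : KStruct Atom) (h : BRel V m K1 K2) :
    BRel V n K1 K2 := by
  induction hnm with
  | refl => exact h
  | @step k hk ih => exact ih (BRel_mono k K1 K2 h)

lemma VBisim_step {K1 K2 : KStruct Atom} (h : VBisim V K1 K2)
    (t1 : K1.M.State) (ht1 : K1.M.R K1.s t1) :
    ∃ t2, K2.M.R K2.s t2 ∧ VBisim V ⟨K1.M, t1⟩ ⟨K2.M, t2⟩ := by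
  have hsel : ∀ n : ℕ, ∃ t2, K2.M.R K2.s t2 ∧ BRel V n ⟨K1.M, t1⟩ ⟨K2.M, t2⟩ := by
    intro n
    exact (h (n + 1)).2.1 t1 ht1
  choose f hfR hfB using hsel
  haveI : Finite K2.M.State := K2.M.stateFinite
  obtain ⟨t2, ht2⟩ := Finite.exists_infinite_fiber f
  have hinf : (f ⁻¹' {t2}).Infinite := Set.infinite_coe_iff.mp ht2
  obtain ⟨m0, hm0, _⟩ := hinf.exists_gt 0
  refine ⟨t2, ?_, ?_⟩
  · have : f m0 = t2 := hm0
    exact this ▸ hfR m0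
  · intro n
    obtain ⟨m, hm, hnm⟩ := hinf.exists_gt n
    have hfm : f m = t2 := hm
    exact BRel_mono_le (le_of_lt hnm) _ _ (hfm ▸ hfB m)

/-- Lifting a path along a V-bisimulation. -/
noncomputable def liftPath (M1 M2 : Kripke Atom) (π : ℕ → M1.State)
    (hπ : ∀ n, M1.R (π n) (π (n + 1))) (s2 : M2.State)
    (h : VBisim V ⟨M1, π 0⟩ ⟨M2, s2⟩) :
    (n : ℕ) → {t : M2.State // VBisim V ⟨M1, π n⟩ ⟨M2, t⟩}
  | 0 => ⟨s2, h⟩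
  | n + 1 =>
    ⟨Classical.choose (VBisim_step (liftPath M1 M2 π hπ s2 h n).2 (π (n + 1)) (hπ n)),
     (Classical.choose_spec (VBisim_step (liftPath M1 M2 π hπ s2 h n).2 (π (n + 1)) (hπ n))).2⟩

lemma liftPath_R (M1 M2 : Kripke Atom) (π : ℕ → M1.State)
    (hπ : ∀ n, M1.R (π n) (π (n + 1))) (s2 : M2.State)
    (h : VBisim V ⟨M1, π 0⟩ ⟨M2, s2⟩) (n : ℕ) :
    M2.R (liftPath M1 M2 π hπ s2 h n).1 (liftPath (V := V) M1 M2 π hπ s2 h (n + 1)).1 :=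
  (Classical.choose_spec (VBisim_step (liftPath M1 M2 π hπ s2 h n).2 (π (n + 1)) (hπ n))).1

lemma sat_invariant (V : Set Atom) :
    ∀ η : CTL Atom, CTL.vars η ∩ V = ∅ →
      ∀ (M1 M2 : Kripke Atom) (s1 : M1.State) (s2 : M2.State),
        VBisim V ⟨M1, s1⟩ ⟨M2, s2⟩ → (Sat M1 η s1 ↔ Sat M2 η s2) := by
  intro η
  induction η with
  | bot => intro _ M1 M2 s1 s2 _; simp [Sat]
  | top => intro _ M1 M2 s1 s2 _; simp [Sat]
  | atom p =>
    intro hv M1 M2 s1 s2 hb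
    have hp : p ∉ V := by
      intro hpV
      have : p ∈ CTL.vars (CTL.atom p) ∩ V := ⟨rfl, hpV⟩
      rw [hv] at this
      exact this
    have h0 : M1.L s1 \ V = M2.L s2 \ V := hb 0
    simp only [Sat]
    constructor
    · intro hin
      have : p ∈ M1.L s1 \ V := ⟨hin, hp⟩
      rw [h0] at this
      exact this.1
    · intro hin
      have : p ∈ M2.L s2 \ V := ⟨hin, hp⟩
      rw [← h0] at this
      exact this.1
  | neg φ ih =>
    intro hv M1 M2 s1 s2 hb
    simp only [Sat]
    exact not_congr (ih hv M1 M2 s1 s2 hb)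
  | or φ ψ ihφ ihψ =>
    intro hv M1 M2 s1 s2 hb
    have hφ : CTL.vars φ ∩ V = ∅ :=
      Set.eq_empty_of_subset_empty (hv ▸ Set.inter_subset_inter_left V Set.subset_union_left)
    have hψ : CTL.vars ψ ∩ V = ∅ :=
      Set.eq_empty_of_subset_empty (hv ▸ Set.inter_subset_inter_left V Set.subset_union_right)
    simp only [Sat]
    exact or_congr (ihφ hφ M1 M2 s1 s2 hb) (ihψ hψ M1 M2 s1 s2 hb)
  | EX φ ih =>
    intro hv M1 M2 s1 s2 hb
    simp only [Sat]
    constructor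
    · rintro ⟨t1, ht1, hsat⟩
      obtain ⟨t2, ht2, hb'⟩ := VBisim_step hb t1 ht1
      exact ⟨t2, ht2, (ih hv M1 M2 t1 t2 hb').mp hsat⟩
    · rintro ⟨t2, ht2, hsat⟩
      obtain ⟨t1, ht1, hb'⟩ := VBisim_step (VBisim_symm hb) t2 ht2
      exact ⟨t1, ht1, (ih hv M1 M2 t1 t2 (VBisim_symm hb')).mpr hsat⟩
  | EG φ ih =>
    intro hv M1 M2 s1 s2 hb
    have fwd : ∀ (N1 N2 : Kripke Atom) (u1 : N1.State) (u2 : N2.State),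
        VBisim V ⟨N1, u1⟩ ⟨N2, u2⟩ → Sat N1 (.EG φ) u1 → Sat N2 (.EG φ) u2 := by
      intro N1 N2 u1 u2 hbis hsat
      obtain ⟨π, hπ0, hπR, hπsat⟩ := hsat
      have hb0 : VBisim V ⟨N1, π 0⟩ ⟨N2, u2⟩ := hπ0 ▸ hbis
      refine ⟨fun n => (liftPath N1 N2 π hπR u2 hb0 n).1, rfl,
        fun n => liftPath_R N1 N2 π hπR u2 hb0 n, fun n => ?_⟩
      exact (ih hv N1 N2 (π n) _ (liftPath N1 N2 π hπR u2 hb0 n).2).mp (hπsat n)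
    exact ⟨fwd M1 M2 s1 s2 hb, fwd M2 M1 s2 s1 (VBisim_symm hb)⟩
  | EU φ ψ ihφ ihψ =>
    intro hv M1 M2 s1 s2 hb
    have hφ : CTL.vars φ ∩ V = ∅ :=
      Set.eq_empty_of_subset_empty (hv ▸ Set.inter_subset_inter_left V Set.subset_union_left)
    have hψ : CTL.vars ψ ∩ V = ∅ :=
      Set.eq_empty_of_subset_empty (hv ▸ Set.inter_subset_inter_left V Set.subset_union_right)
    have fwd : ∀ (N1 N2 : Kripke Atom) (u1 : N1.State) (u2 : N2.State),
        VBisim V ⟨N1, u1⟩ ⟨N2, u2⟩ → Sat N1 (.EU φ ψ) u1 → Sat N2 (.EU φ ψ) u2 := by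
      intro N1 N2 u1 u2 hbis hsat
      obtain ⟨π, hπ0, hπR, i, hi, hj⟩ := hsat
      have hb0 : VBisim V ⟨N1, π 0⟩ ⟨N2, u2⟩ := hπ0 ▸ hbis
      refine ⟨fun n => (liftPath N1 N2 π hπR u2 hb0 n).1, rfl,
        fun n => liftPath_R N1 N2 π hπR u2 hb0 n, i, ?_, fun j hji => ?_⟩
      · exact (ihψ hψ N1 N2 (π i) _ (liftPath N1 N2 π hπR u2 hb0 i).2).mp hi
      · exact (ihφ hφ N1 N2 (π j) _ (liftPath N1 N2 π hπR u2 hb0 j).2).mp (hj j hji)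
    exact ⟨fwd M1 M2 s1 s2 hb, fwd M2 M1 s2 s1 (VBisim_symm hb)⟩

end ForgetAux

/-- a result of forgetting satisfies the forgetting postulates
(W), (PP), (NP) and (IR), and its models are exactly the models of the theory
`{η : φ ⊨ η and IR(η,V)}`. -/
theorem forget_postulates {Atom : Type u} [Finite Atom] (φ : CTL Atom) (V : Set Atom)
    (ψ : CTL Atom) (h : IsForget φ V ψ) :
    Entails φ ψ ∧
    (∀ η : CTL Atom, IR η V → Entails φ η → Entails ψ η) ∧
    (∀ η : CTL Atom, IR η V → ¬ Entails φ η → ¬ Entails ψ η) ∧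
    IR ψ V ∧
    CTLMod ψ = {K : InitKripke Atom | ∀ η : CTL Atom, Entails φ η → IR η V → K ∈ CTLMod η} := by
  obtain ⟨hvars, hmod⟩ := h
  have W : Entails φ ψ := by
    intro K hK
    rw [hmod]
    exact ⟨K, hK, fun n => BRel_refl n _⟩
  have PP : ∀ η : CTL Atom, IR η V → Entails φ η → Entails ψ η := by
    rintro η ⟨η', hη'v, hequiv⟩ hent K hK
    rw [hmod] at hK
    obtain ⟨K', hK'φ, hbis⟩ := hK
    have hK'η : K' ∈ CTLMod η := hent hK'φ
    have hK'η' : K' ∈ CTLMod η' := hequiv ▸ hK'η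
    have : Sat K.toKripke η' K.s0 :=
      (sat_invariant V η' hη'v K'.toKripke K.toKripke K'.s0 K.s0 hbis).mp hK'η'
    have hKη' : K ∈ CTLMod η' := this
    rw [CTLEquiv] at hequiv
    exact hequiv ▸ hKη'
  refine ⟨W, PP, ?_, ⟨ψ, hvars, rfl⟩, ?_⟩
  · intro η hIR hnent hψη
    apply hnent
    intro K hK
    exact hψη (W hK)
  · ext K
    constructor
    · intro hK η hent hIR
      exact PP η hIR hent hK
    · intro hK
      exact hK ψ W ⟨ψ, hvars, rfl⟩
end

section
/- Let ψ_1, ψ_2 be CTL formulas and V ⊆ 𝒜. If χ_1 is a result of forgetting V from ψ_1, χ_2 is a result of forgetting V from ψ_2, and χ is a result of forgetting V from ψ_1 ∨ ψ_2, then χ ≡ χ_1 ∨ χ_2. Moreover, if χ' is a result of forgetting V from ψ_1 ∧ ψ_2, then χ' ⊨ χ_1 ∧ χ_2. -/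
universe u

/-- forgetting distributes over disjunction, and the result of forgetting from a
conjunction entails the conjunction of the results of forgetting. -/
theorem forget_or_and {Atom : Type u} [Finite Atom] (ψ1 ψ2 : CTL Atom) (V : Set Atom)
    (χ1 χ2 : CTL Atom) (h1 : IsForget ψ1 V χ1) (h2 : IsForget ψ2 V χ2) :
    (∀ χ : CTL Atom, IsForget (CTL.or ψ1 ψ2) V χ → CTLEquiv χ (CTL.or χ1 χ2)) ∧
    (∀ χ' : CTL Atom, IsForget (ψ1.and ψ2) V χ' → Entails χ' (χ1.and χ2)) := by
  obtain ⟨_, e1⟩ := h1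
  obtain ⟨_, e2⟩ := h2
  constructor
  · rintro χ ⟨_, e⟩
    have hor : CTLMod (CTL.or χ1 χ2) = CTLMod χ1 ∪ CTLMod χ2 := by
      ext K; simp [CTLMod, Sat]
    rw [CTLEquiv, e, hor, e1, e2]
    ext K
    simp only [Set.mem_setOf_eq, Set.mem_union]
    constructor
    · rintro ⟨K', hK', hb⟩
      have hK'' : Sat K'.toKripke ψ1 K'.s0 ∨ Sat K'.toKripke ψ2 K'.s0 := hK'
      rcases hK'' with h | h
      exacts [Or.inl ⟨K', h, hb⟩, Or.inr ⟨K', h, hb⟩]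
    · rintro (⟨K', h, hb⟩ | ⟨K', h, hb⟩)
      · exact ⟨K', Or.inl h, hb⟩
      · exact ⟨K', Or.inr h, hb⟩
  · rintro χ' ⟨_, e⟩
    intro K hK
    rw [e] at hK
    obtain ⟨K', hK', hb⟩ := hK
    have hA : Sat K'.toKripke (ψ1.and ψ2) K'.s0 := hK'
    simp only [CTL.and, Sat, not_or, not_not] at hA
    show Sat K.toKripke (χ1.and χ2) K.s0
    simp only [CTL.and, Sat, not_or, not_not]
    constructor
    · have : K ∈ CTLMod χ1 := by rw [e1]; exact ⟨K', hA.1, hb⟩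
      exact this
    · have : K ∈ CTLMod χ2 := by rw [e2]; exact ⟨K', hA.2, hb⟩
      exact this
end
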